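/- Let g be a finite-dimensional Lie algebra over k whose dual g* carries a Lie algebra bracket [·,·]*. Suppose the Lie bialgebra is a coboundary one; concretely, suppose there is a k-linear map ρ : g* → g such that ad*_ξ(x) = ρ(ad*_x ξ) + ⁅x, ρ(ξ)⁆ for all x ∈ g and ξ ∈ g*. Define S : g* → End(g*) by S(ξ) = −ad*_{ρ(ξ)}. Then S satisfies the Atiyah cocycle equation: −ad*_x ∘ S(ξ) + S(ξ) ∘ ad*_x + S(ad*_x ξ) + ad*_{ad*_ξ x} = 0 for all x ∈ g and ξ ∈ g*. (In particular, the Atiyah class of the Lie pair (g ⋈ g*, g) vanishes.) -/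

import Mathlib

open Module

variable (k : Type*) [Field k] (g : Type*) [LieRing g] [LieAlgebra k g]

/-- `adStar k g x` is the dual (transpose) of `ad x : g →ₗ[k] g`,
so `adStar k g x ξ y = ξ ⁅x, y⁆`. -/
noncomputable def adStar : g →ₗ[k] Module.End k (Module.Dual k g) :=
  (Module.Dual.transpose (R := k)) ∘ₗ (LieAlgebra.ad k g : g →ₗ[k] Module.End k g)

/-- Given `ρ : g* → g`, the map `S(ξ) = −ad*_{ρ(ξ)} = ad*_{−ρ(ξ)}`. -/
noncomputable def coboundaryS (ρ : Module.Dual k g →ₗ[k] g) :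
    Module.Dual k g →ₗ[k] Module.End k (Module.Dual k g) :=
  (adStar k g) ∘ₗ (-ρ)

/-- If the Lie bialgebra is a coboundary one, i.e. there is a linear `ρ : g* → g` with
`ad*_ξ x = ρ(ad*_x ξ) + ⁅x, ρ(ξ)⁆` for all `x, ξ`, then `S(ξ) = −ad*_{ρ(ξ)}` satisfies the
Atiyah cocycle equation `−ad*_x ∘ S(ξ) + S(ξ) ∘ ad*_x + S(ad*_x ξ) + ad*_{ad*_ξ x} = 0`.
(In particular the Atiyah class of the Lie pair `(g ⋈ g*, g)` vanishes.) -/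
theorem coboundary_S_solves_atiyah_equation [FiniteDimensional k g]
    (br : Module.Dual k g →ₗ[k] Module.Dual k g →ₗ[k] Module.Dual k g)
    (hskew : ∀ ξ, br ξ ξ = 0)
    (hjac : ∀ ξ η ζ, br ξ (br η ζ) = br (br ξ η) ζ + br η (br ξ ζ))
    (astar : Module.Dual k g →ₗ[k] g →ₗ[k] g)
    (hastar : ∀ (ξ η : Module.Dual k g) (x : g), η (astar ξ x) = br ξ η x)
    (ρ : Module.Dual k g →ₗ[k] g)
    (hρ : ∀ (x : g) (ξ : Module.Dual k g),
      astar ξ x = ρ (adStar k g x ξ) + ⁅x, ρ ξ⁆) :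
    ∀ (x : g) (ξ : Module.Dual k g),
      -(adStar k g x * coboundaryS k g ρ ξ) + coboundaryS k g ρ ξ * adStar k g x
        + coboundaryS k g ρ (adStar k g x ξ) + adStar k g (astar ξ x) = 0 := by
  intro x ξ
  ext η y
  simp only [hρ, adStar, coboundaryS, Module.Dual.transpose, LieAlgebra.ad_apply,
    LinearMap.comp_apply, LinearMap.neg_apply, LinearMap.add_apply, Module.End.mul_apply,
    LinearMap.flip_apply, LinearMap.llcomp_apply, LieHom.coe_toLinearMap, map_add, map_neg,
    LinearMap.zero_apply, LinearMap.coe_mk]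
  have : ⁅x, ⁅ρ ξ, y⁆⁆ = ⁅⁅x, ρ ξ⁆, y⁆ + ⁅ρ ξ, ⁅x, y⁆⁆ := leibniz_lie x (ρ ξ) y
  rw [this, map_add η]
  ring
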